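/- arXiv:2403.17868 — 2 statements merged into one kernel-verified Lean document; each statement's English description precedes it below -/
import Mathlib

section
/- Helstrom–Holevo theorem (one copy, finite dimension): Let ρ and σ be quantum states on ℂ^d, let p ∈ (0,1) and q := 1 − p. Then inf{ p·Tr[(I − Λ)ρ] + q·Tr[Λσ] : Λ a d×d complex matrix with 0 ≤ Λ ≤ I } = (1/2)·(1 − ‖p·ρ − q·σ‖₁), and the infimum is attained. -/
open scoped ComplexOrder Classical

noncomputable section

namespace QHT

variable {ι : Type*} [Fintype ι] [DecidableEq ι]

/-- The positive semidefinite square root of a positive semidefinite matrix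
(the definition of `Matrix.PosSemidef.sqrt` in the older Mathlib). -/
def psdSqrt {A : Matrix ι ι ℂ} (hA : A.PosSemidef) : Matrix ι ι ℂ :=
  hA.1.eigenvectorUnitary.1 * Matrix.diagonal ((↑) ∘ (√·) ∘ hA.1.eigenvalues) *
    (star hA.1.eigenvectorUnitary : Matrix ι ι ℂ)

/-- Trace norm of a complex matrix: `Tr[√(Aᴴ A)]`. -/
def traceNorm (A : Matrix ι ι ℂ) : ℝ :=
  ((psdSqrt (Matrix.posSemidef_conjTranspose_mul_self A)).trace).re

/-- A quantum state: positive semidefinite with unit trace. -/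
def IsState (ρ : Matrix ι ι ℂ) : Prop := ρ.PosSemidef ∧ ρ.trace = 1

/-- Positive semidefinite square root (junk value `0` off the PSD matrices). -/
def matSqrt (A : Matrix ι ι ℂ) : Matrix ι ι ℂ :=
  if h : A.PosSemidef then psdSqrt h else 0

/-- Real power of a Hermitian matrix, applying `x ↦ x ^ s` to positive
eigenvalues and `x ↦ 0` to the remaining ones (so `A ^ 0` is the support
projection); junk value `0` off the Hermitian matrices. -/
def matRpow (A : Matrix ι ι ℂ) (s : ℝ) : Matrix ι ι ℂ :=
  if h : A.IsHermitian then
    (h.eigenvectorUnitary : Matrix ι ι ℂ) *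
      Matrix.diagonal (fun i =>
        ((if 0 < h.eigenvalues i then (h.eigenvalues i) ^ s else 0 : ℝ) : ℂ)) *
      (star (h.eigenvectorUnitary : Matrix ι ι ℂ))
  else 0

/-- Fidelity `F(ρ,σ) = ‖√ρ √σ‖₁²`. -/
def Fid (ρ σ : Matrix ι ι ℂ) : ℝ := (traceNorm (matSqrt ρ * matSqrt σ)) ^ 2

/-- Holevo fidelity `F_H(ρ,σ) = (Tr[√ρ √σ])²`. -/
def FidH (ρ σ : Matrix ι ι ℂ) : ℝ := (((matSqrt ρ * matSqrt σ).trace).re) ^ 2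

/-- `Q_s(A‖B) = Tr[A^s B^{1-s}]`. -/
def Qs (s : ℝ) (A B : Matrix ι ι ℂ) : ℝ := ((matRpow A s * matRpow B (1 - s)).trace).re

/-- `Q_min(A‖B) = min_{s ∈ [0,1]} Q_s(A‖B)`. -/
def Qmin (A B : Matrix ι ι ℂ) : ℝ :=
  sInf { x : ℝ | ∃ s ∈ Set.Icc (0 : ℝ) 1, x = Qs s A B }

/-- Bures distance. -/
def dB (ρ σ : Matrix ι ι ℂ) : ℝ := Real.sqrt (2 * (1 - Real.sqrt (Fid ρ σ)))

/-- Quantum Hellinger distance. -/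
def dH (ρ σ : Matrix ι ι ℂ) : ℝ := Real.sqrt (2 * (1 - Real.sqrt (FidH ρ σ)))

/-- `n`-fold Kronecker (tensor) power of a matrix. -/
def tensorPow {d : ℕ} (A : Matrix (Fin d) (Fin d) ℂ) (n : ℕ) :
    Matrix (Fin n → Fin d) (Fin n → Fin d) ℂ :=
  Matrix.of fun i j => ∏ k, A (i k) (j k)

/-- Optimal error probability of symmetric binary quantum hypothesis testing
with `n` copies. -/
def pErr {d : ℕ} (p : ℝ) (ρ : Matrix (Fin d) (Fin d) ℂ) (q : ℝ)
    (σ : Matrix (Fin d) (Fin d) ℂ) (n : ℕ) : ℝ :=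
  sInf { x : ℝ | ∃ Λ : Matrix (Fin n → Fin d) (Fin n → Fin d) ℂ,
    Λ.PosSemidef ∧ (1 - Λ).PosSemidef ∧
    x = p * (((1 - Λ) * tensorPow ρ n).trace).re + q * ((Λ * tensorPow σ n).trace).re }

/-- Sample complexity of symmetric binary quantum hypothesis testing. -/
def sampleComplexity {d : ℕ} (p : ℝ) (ρ : Matrix (Fin d) (Fin d) ℂ) (q : ℝ)
    (σ : Matrix (Fin d) (Fin d) ℂ) (ε : ℝ) : ℕ :=
  sInf { n : ℕ | 1 ≤ n ∧ pErr p ρ q σ n ≤ ε }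

/-- Optimal type II error `β_ε(ρ‖σ)` of asymmetric hypothesis testing. -/
def betaErr (ε : ℝ) (ρ σ : Matrix ι ι ℂ) : ℝ :=
  sInf { x : ℝ | ∃ Λ : Matrix ι ι ℂ, Λ.PosSemidef ∧ (1 - Λ).PosSemidef ∧
    (((1 - Λ) * ρ).trace).re ≤ ε ∧ x = ((Λ * σ).trace).re }

/-- Sample complexity of asymmetric binary quantum hypothesis testing. -/
def sampleComplexityAsym {d : ℕ} (ρ σ : Matrix (Fin d) (Fin d) ℂ) (ε δ : ℝ) : ℕ :=
  sInf { n : ℕ | 1 ≤ n ∧ betaErr ε (tensorPow ρ n) (tensorPow σ n) ≤ δ }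

/-- Petz–Rényi divergence `D_α(ρ‖σ)`. -/
def petzRenyi (α : ℝ) (ρ σ : Matrix ι ι ℂ) : ℝ :=
  (1 / (α - 1)) * Real.log (((matRpow ρ α * matRpow σ (1 - α)).trace).re)

/-- Sandwiched Rényi divergence `D̃_α(ρ‖σ)`. -/
def sandwichedRenyi (α : ℝ) (ρ σ : Matrix ι ι ℂ) : ℝ :=
  (1 / (α - 1)) * Real.log
    (((matRpow (matRpow σ ((1 - α) / (2 * α)) * ρ * matRpow σ ((1 - α) / (2 * α))) α).trace).re)


lemma psd_diag_re_nonneg {M : Matrix ι ι ℂ} (hM : M.PosSemidef) (i : ι) :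
    0 ≤ (M i i).re := by
  exact (Complex.nonneg_iff.mp hM.diag_nonneg).1

lemma trace_mul_diagonal' (M : Matrix ι ι ℂ) (v : ι → ℂ) :
    (M * Matrix.diagonal v).trace = ∑ i, M i i * v i := by
  simp [Matrix.trace, Matrix.diag, Matrix.mul_diagonal]

section main
variable {A : Matrix ι ι ℂ} (hA : A.IsHermitian)

local notation "U" => (hA.eigenvectorUnitary : Matrix ι ι ℂ)
local notation "e" => hA.eigenvalues

lemma hU1 : U * star U = 1 := Matrix.mem_unitaryGroup_iff.mp hA.eigenvectorUnitary.2
lemma hU2 : star U * U = 1 := Matrix.mem_unitaryGroup_iff'.mp hA.eigenvectorUnitary.2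

lemma conj_diag_mul (v w : ι → ℂ) :
    (U * Matrix.diagonal v * star U) * (U * Matrix.diagonal w * star U)
      = U * Matrix.diagonal (fun i => v i * w i) * star U := by
  have h2 := hU2 hA
  calc (U * Matrix.diagonal v * star U) * (U * Matrix.diagonal w * star U)
      = U * (Matrix.diagonal v * ((star U * U) * (Matrix.diagonal w * star U))) := by
        simp only [Matrix.mul_assoc]
    _ = U * Matrix.diagonal (fun i => v i * w i) * star U := by
        rw [h2, one_mul, ← Matrix.mul_assoc, ← Matrix.mul_assoc,
          Matrix.mul_assoc _ (Matrix.diagonal v), Matrix.diagonal_mul_diagonal]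

lemma conj_diag_psd (v : ι → ℂ) (hv : ∀ i, 0 ≤ v i) :
    (U * Matrix.diagonal v * star U).PosSemidef := by
  rw [Matrix.star_eq_conjTranspose]
  exact (Matrix.PosSemidef.diagonal hv).mul_mul_conjTranspose_same _

lemma conj_diag_trace (v : ι → ℂ) :
    (U * Matrix.diagonal v * star U).trace = ∑ i, v i := by
  rw [Matrix.trace_mul_comm, ← Matrix.mul_assoc, hU2 hA, one_mul, Matrix.trace_diagonal]

lemma spec : A = U * Matrix.diagonal (fun i => (e i : ℂ)) * star U := by
  have := hA.spectral_theorem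
  rw [Unitary.conjStarAlgAut_apply] at this
  exact this

lemma trace_mul_formula (Λ : Matrix ι ι ℂ) :
    ((Λ * A).trace).re = ∑ i, e i * ((star U * Λ * U) i i).re := by
  conv_lhs => rw [spec hA]
  rw [← Matrix.mul_assoc, ← Matrix.mul_assoc, Matrix.trace_mul_comm,
    ← Matrix.mul_assoc, trace_mul_diagonal']
  rw [Complex.re_sum]
  congr 1; funext i
  rw [mul_comm, Complex.re_ofReal_mul, Matrix.mul_assoc]

lemma traceNorm_herm : traceNorm A = ∑ i, |e i| := by
  set S : Matrix ι ι ℂ := U * Matrix.diagonal (fun i => ((|e i| : ℝ) : ℂ)) * star U with hS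
  have hSpsd : S.PosSemidef := conj_diag_psd hA _ fun i => by
    simpa using Complex.zero_le_real.mpr (abs_nonneg _)
  have hsq : S ^ 2 = Matrix.conjTranspose A * A := by
    rw [show Matrix.conjTranspose A = A from hA.eq, pow_two, hS, conj_diag_mul hA]
    conv_rhs => rw [spec hA, conj_diag_mul hA]
    simp only [← Complex.ofReal_mul, abs_mul_abs_self]
  have hB := Matrix.posSemidef_conjTranspose_mul_self A
  have this : psdSqrt hB = S := by
    have h1 : psdSqrt hB = cfc Real.sqrt (Matrix.conjTranspose A * A) := by
      rw [hB.1.cfc_eq, Matrix.IsHermitian.cfc, Unitary.conjStarAlgAut_apply]; rfl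
    have h2 : Matrix.conjTranspose A * A = cfc (fun x : ℝ => x ^ 2) A := by
      rw [cfc_pow_id A 2 hA.isSelfAdjoint, show Matrix.conjTranspose A = A from hA.eq, pow_two]
    rw [h1, h2, ← cfc_comp Real.sqrt (fun x : ℝ => x ^ 2) A hA.isSelfAdjoint, hA.cfc_eq,
      Matrix.IsHermitian.cfc, Unitary.conjStarAlgAut_apply, hS]
    congr 3; funext i
    show ((√((e i) ^ 2) : ℝ) : ℂ) = _
    rw [Real.sqrt_sq_eq_abs]
  rw [traceNorm, this, hS, conj_diag_trace hA, Complex.re_sum]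
  simp

end main

theorem helstrom_holevo' {d : ℕ} (ρ σ : Matrix (Fin d) (Fin d) ℂ)
    (hρ : ρ.PosSemidef ∧ ρ.trace = 1) (hσ : σ.PosSemidef ∧ σ.trace = 1)
    (p q : ℝ) (hp : p ∈ Set.Ioo (0 : ℝ) 1) (hq : q = 1 - p) :
    IsLeast { x : ℝ | ∃ Λ : Matrix (Fin d) (Fin d) ℂ,
        Λ.PosSemidef ∧ (1 - Λ).PosSemidef ∧
        x = p * (((1 - Λ) * ρ).trace).re + q * ((Λ * σ).trace).re }
      ((1 / 2) * (1 - traceNorm (p • ρ - q • σ))) := by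
  obtain ⟨hρP, hρT⟩ := hρ
  obtain ⟨hσP, hσT⟩ := hσ
  set A : Matrix (Fin d) (Fin d) ℂ := p • ρ - q • σ with hAdef
  have hA : A.IsHermitian := by
    have h1 : (p • ρ).IsHermitian := by
      rw [Matrix.IsHermitian, Matrix.conjTranspose_smul, star_trivial, hρP.1.eq]
    have h2 : (q • σ).IsHermitian := by
      rw [Matrix.IsHermitian, Matrix.conjTranspose_smul, star_trivial, hσP.1.eq]
    exact h1.sub h2
  set Uu : Matrix (Fin d) (Fin d) ℂ := (hA.eigenvectorUnitary : Matrix (Fin d) (Fin d) ℂ)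
    with hUdef
  set ev : Fin d → ℝ := hA.eigenvalues with hevdef
  set t : ℝ := ∑ i, if 0 ≤ ev i then ev i else 0 with htdef
  -- sum of eigenvalues
  have hsum : ∑ i, ev i = p - q := by
    have h1 : A.trace = ((p : ℂ) - q) := by
      rw [hAdef, Matrix.trace_sub, Matrix.trace_smul, Matrix.trace_smul, hρT, hσT]
      simp [Complex.real_smul]
    have h2 : A.trace = ∑ i, (ev i : ℂ) := by
      conv_lhs => rw [spec hA]
      rw [conj_diag_trace hA]
    rw [h1] at h2
    have := congrArg Complex.re h2
    simpa [Complex.re_sum] using this.symm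
  have habs : traceNorm A = ∑ i, |ev i| := traceNorm_herm hA
  have habs2 : ∑ i, |ev i| = 2 * t - (p - q) := by
    rw [htdef, ← hsum, Finset.mul_sum, ← Finset.sum_sub_distrib]
    refine Finset.sum_congr rfl fun i _ => ?_
    by_cases h : 0 ≤ ev i
    · rw [abs_of_nonneg h, if_pos h]; ring
    · rw [abs_of_neg (lt_of_not_ge h), if_neg h]; ring
  -- objective rewrite
  have hval : ∀ Λ : Matrix (Fin d) (Fin d) ℂ,
      p * (((1 - Λ) * ρ).trace).re + q * ((Λ * σ).trace).re
        = p - ((Λ * A).trace).re := by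
    intro Λ
    have h1 : Λ * A = p • (Λ * ρ) - q • (Λ * σ) := by
      rw [hAdef, Matrix.mul_sub, Matrix.mul_smul, Matrix.mul_smul]
    have h2 : (1 - Λ) * ρ = ρ - Λ * ρ := by rw [Matrix.sub_mul, Matrix.one_mul]
    rw [h1, h2, Matrix.trace_sub, Matrix.trace_sub, Matrix.trace_smul, Matrix.trace_smul, hρT]
    simp only [Complex.sub_re, Complex.one_re, Complex.smul_re, smul_eq_mul]
    ring
  -- upper bound on Tr[Λ A]
  have hbound : ∀ Λ : Matrix (Fin d) (Fin d) ℂ, Λ.PosSemidef → (1 - Λ).PosSemidef →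
      ((Λ * A).trace).re ≤ t := by
    intro Λ h1 h2
    rw [trace_mul_formula hA, htdef]
    refine Finset.sum_le_sum fun i _ => ?_
    set M : Matrix (Fin d) (Fin d) ℂ := star Uu * Λ * Uu with hMdef
    have hM : M.PosSemidef := by
      rw [hMdef, Matrix.star_eq_conjTranspose]
      exact h1.conjTranspose_mul_mul_same _
    have hM0 : 0 ≤ (M i i).re := psd_diag_re_nonneg hM i
    have hMsub : (1 : Matrix (Fin d) (Fin d) ℂ) - M = star Uu * (1 - Λ) * Uu := by
      rw [Matrix.mul_sub, Matrix.mul_one, Matrix.sub_mul, hU2 hA, hMdef]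
    have hM2 : ((1 : Matrix (Fin d) (Fin d) ℂ) - M).PosSemidef := by
      rw [hMsub, Matrix.star_eq_conjTranspose]
      exact h2.conjTranspose_mul_mul_same _
    have hM1 : (M i i).re ≤ 1 := by
      have := psd_diag_re_nonneg hM2 i
      simp only [Matrix.sub_apply, Matrix.one_apply_eq, Complex.sub_re, Complex.one_re] at this
      linarith
    by_cases h : 0 ≤ ev i
    · rw [if_pos h]; nlinarith
    · rw [if_neg h]; push_neg at h; nlinarith
  constructor
  · -- membership: optimal projector
    set ind : Fin d → ℂ := fun i => if 0 ≤ ev i then (1 : ℂ) else 0 with hinddef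
    refine ⟨Uu * Matrix.diagonal ind * star Uu, ?_, ?_, ?_⟩
    · exact conj_diag_psd hA ind fun i => by
        rw [hinddef]; dsimp only; split <;> simp
    · have hone : Uu * Matrix.diagonal (fun _ : Fin d => (1 : ℂ)) * star Uu = 1 := by
        rw [show Matrix.diagonal (fun _ : Fin d => (1 : ℂ)) = 1 from Matrix.diagonal_one,
          Matrix.mul_one, hU1 hA]
      have : (1 : Matrix (Fin d) (Fin d) ℂ) - Uu * Matrix.diagonal ind * star Uu
          = Uu * Matrix.diagonal (fun i => 1 - ind i) * star Uu := by
        rw [← hone, show Matrix.diagonal (fun i => 1 - ind i)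
            = Matrix.diagonal (fun _ : Fin d => (1 : ℂ)) - Matrix.diagonal ind from by
          rw [Matrix.diagonal_sub], Matrix.mul_sub, Matrix.sub_mul]
      rw [this]
      exact conj_diag_psd hA _ fun i => by
        rw [hinddef]; dsimp only; split <;> simp
    · rw [hval]
      have hdiag : star Uu * (Uu * Matrix.diagonal ind * star Uu) * Uu
          = Matrix.diagonal ind := by
        rw [← Matrix.mul_assoc, ← Matrix.mul_assoc, hU2 hA, one_mul,
          Matrix.mul_assoc, hU2 hA, Matrix.mul_one]
      have hv : (((Uu * Matrix.diagonal ind * star Uu) * A).trace).re = t := by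
        rw [trace_mul_formula hA, hdiag, htdef]
        refine Finset.sum_congr rfl fun i _ => ?_
        rw [Matrix.diagonal_apply_eq, hinddef]
        dsimp only
        split <;> simp [hevdef]
      rw [hv, habs, habs2, hq]
      ring
  · -- lower bound
    rintro x ⟨Λ, h1, h2, rfl⟩
    rw [hval, habs, habs2, hq]
    have := hbound Λ h1 h2
    linarith


/-- **Helstrom–Holevo theorem** (one copy, finite dimension): the optimal error
probability of symmetric binary quantum hypothesis testing equals
`(1/2)(1 - ‖pρ - qσ‖₁)`, and the infimum is attained. -/
theorem helstrom_holevo {d : ℕ} (ρ σ : Matrix (Fin d) (Fin d) ℂ)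
    (hρ : IsState ρ) (hσ : IsState σ)
    (p q : ℝ) (hp : p ∈ Set.Ioo (0 : ℝ) 1) (hq : q = 1 - p) :
    IsLeast { x : ℝ | ∃ Λ : Matrix (Fin d) (Fin d) ℂ,
        Λ.PosSemidef ∧ (1 - Λ).PosSemidef ∧
        x = p * (((1 - Λ) * ρ).trace).re + q * ((Λ * σ).trace).re }
      ((1 / 2) * (1 - traceNorm (p • ρ - q • σ))) :=
  helstrom_holevo' ρ σ hρ hσ p q hp hq

end QHT

end
end

section
/- Sample complexity of symmetric binary quantum hypothesis testing for two pure states: Let ψ, φ be unit vectors in ℂ^d with 0 < |⟨ψ,φ⟩| < 1, let p ∈ (0,1), q := 1 − p, and let ε ∈ (0, min{p,q}). Set F := |⟨ψ,φ⟩|². Then n*(p, ψψ*, q, φφ*, ε) = ⌈ ln( pq / (ε(1−ε)) ) / (−ln F) ⌉, where ψψ* denotes the rank-one projection onto ψ. -/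
open scoped ComplexOrder Classical

noncomputable section

namespace QHT

variable {ι : Type*} [Fintype ι] [DecidableEq ι]

section AuxQHT
set_option maxHeartbeats 2000000
open Matrix

lemma quad_id (p sa sb sa' sb' : ℝ) (h1 : sa'^2 = 1 - sa^2) (h2 : sb'^2 = 1 - sb^2) :
    (1 - 2*(p*(1-sa^2)+(1-p)*sb^2))^2 + 4*p*(1-p)*(sa*sb+sa'*sb')^2
      + 4*(p*sa*sa' - (1-p)*sb*sb')^2 = 1 := by
  linear_combination (4*p*(1-p)*sb'^2 + 4*p^2*sa^2) * h1
    + (4*p*(1-p)*(1-sa^2) + 4*(1-p)^2*sb^2) * h2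

lemma key_ineq (p q a b c : ℝ) (hp : 0 < p) (hq : 0 < q) (hpq : p + q = 1)
    (ha0 : 0 ≤ a) (ha1 : a ≤ 1) (hb0 : 0 ≤ b) (hb1 : b ≤ 1) (hc0 : 0 ≤ c) (hc1 : c ≤ 1)
    (hcs : c ≤ Real.sqrt (a*b) + Real.sqrt ((1-a)*(1-b))) :
    (1 - Real.sqrt (1 - 4*p*q*c^2))/2 ≤ p*(1-a) + q*b := by
  have hq' : q = 1 - p := by linarith
  subst hq'
  set sa := Real.sqrt a
  set sb := Real.sqrt b
  set sa' := Real.sqrt (1-a)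
  set sb' := Real.sqrt (1-b)
  have hsa : sa^2 = a := Real.sq_sqrt ha0
  have hsb : sb^2 = b := Real.sq_sqrt hb0
  have hsa' : sa'^2 = 1-a := Real.sq_sqrt (by linarith)
  have hsb' : sb'^2 = 1-b := Real.sq_sqrt (by linarith)
  have hsa0 : 0 ≤ sa := Real.sqrt_nonneg _
  have hsb0 : 0 ≤ sb := Real.sqrt_nonneg _
  have hsa'0 : 0 ≤ sa' := Real.sqrt_nonneg _
  have hsb'0 : 0 ≤ sb' := Real.sqrt_nonneg _
  have hab : Real.sqrt (a*b) = sa*sb := Real.sqrt_mul ha0 b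
  have hab' : Real.sqrt ((1-a)*(1-b)) = sa'*sb' := Real.sqrt_mul (by linarith) _
  rw [hab, hab'] at hcs
  have hid := quad_id p sa sb sa' sb' (by rw [hsa', hsa]) (by rw [hsb', hsb])
  rw [hsa, hsb] at hid
  have key : (1 - 2*(p*(1-a)+(1-p)*b))^2 ≤ 1 - 4*p*(1-p)*c^2 := by
    have h1 : c^2 ≤ (sa*sb + sa'*sb')^2 := by
      apply sq_le_sq' <;> nlinarith [mul_nonneg hsa0 hsb0, mul_nonneg hsa'0 hsb'0]
    nlinarith [sq_nonneg (p*sa*sa' - (1-p)*sb*sb'), mul_pos hp hq]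
  have ht0 : 0 ≤ Real.sqrt (1 - 4*p*(1-p)*c^2) := Real.sqrt_nonneg _
  have h4 : (1 - 2*(p*(1-a)+(1-p)*b)) ≤ Real.sqrt (1 - 4*p*(1-p)*c^2) := by
    rcases le_or_gt (1 - 2*(p*(1-a)+(1-p)*b)) 0 with h | h
    · linarith
    · rw [Real.le_sqrt h.le (le_trans (sq_nonneg _) key)]
      exact key
  linarith



def outer (u : ι → ℂ) : Matrix ι ι ℂ := Matrix.of fun i j => u i * starRingEnd ℂ (u j)

omit [DecidableEq ι] in
lemma dot_conj (x w : ι → ℂ) : star x ⬝ᵥ w = starRingEnd ℂ (star w ⬝ᵥ x) := by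
  simp [dotProduct, Pi.star_apply, map_sum, mul_comm]

omit [DecidableEq ι] in
lemma mulVec_outer (w x : ι → ℂ) : (outer w) *ᵥ x = (star w ⬝ᵥ x) • w := by
  funext i
  simp [outer, Matrix.mulVec, dotProduct, Finset.sum_mul, Finset.mul_sum]
  exact Finset.sum_congr rfl fun j _ => by ring

omit [DecidableEq ι] in
lemma dot_outer (w x y : ι → ℂ) : star x ⬝ᵥ (outer w) *ᵥ y = (star x ⬝ᵥ w) * (star w ⬝ᵥ y) := by
  rw [mulVec_outer, dotProduct_smul, smul_eq_mul]
  ring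

omit [DecidableEq ι] in
lemma trace_mul_outer (Λ : Matrix ι ι ℂ) (u : ι → ℂ) :
    (Λ * outer u).trace = star u ⬝ᵥ Λ *ᵥ u := by
  simp only [Matrix.trace, Matrix.diag, Matrix.mul_apply, outer, Matrix.of_apply,
    dotProduct, Matrix.mulVec, Pi.star_apply, Finset.mul_sum, Complex.star_def]
  exact Finset.sum_congr rfl fun i _ => Finset.sum_congr rfl fun j _ => by ring

omit [DecidableEq ι] in
lemma outer_psd (w : ι → ℂ) : (outer w).PosSemidef := by
  refine Matrix.PosSemidef.of_dotProduct_mulVec_nonneg ?_ ?_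
  · ext i j
    simp [outer, Matrix.conjTranspose_apply, mul_comm]
  · intro x
    rw [dot_outer, dot_conj x w]
    rw [← Complex.normSq_eq_conj_mul_self]
    exact Complex.zero_le_real.mpr (Complex.normSq_nonneg _)

omit [DecidableEq ι] in
lemma psd_cs (M : Matrix ι ι ℂ) (h : M.PosSemidef) (u v : ι → ℂ) :
    ‖(star u ⬝ᵥ M *ᵥ v)‖ ^ 2 ≤ (star u ⬝ᵥ M *ᵥ u).re * (star v ⬝ᵥ M *ᵥ v).re := by
  obtain ⟨B, rfl⟩ : ∃ B : Matrix ι ι ℂ, M = Bᴴ * B := by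
    classical
    open scoped MatrixOrder in
    obtain ⟨B, hB⟩ := CStarAlgebra.nonneg_iff_eq_star_mul_self.mp h.nonneg
    exact ⟨B, hB⟩
  have key : ∀ w z : ι → ℂ, star w ⬝ᵥ (Bᴴ * B) *ᵥ z
      = (inner ℂ ((WithLp.equiv 2 (ι → ℂ)).symm (B *ᵥ w)) ((WithLp.equiv 2 (ι → ℂ)).symm (B *ᵥ z)) : ℂ) := by
    intro w z
    rw [← Matrix.mulVec_mulVec, Matrix.dotProduct_mulVec, ← Matrix.star_mulVec]
    simp [inner, dotProduct, WithLp.equiv, mul_comm]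
  rw [key, key, key]
  set x := (WithLp.equiv 2 (ι → ℂ)).symm (B *ᵥ u)
  set y := (WithLp.equiv 2 (ι → ℂ)).symm (B *ᵥ v)
  have h1 : ‖(inner ℂ x y : ℂ)‖ ≤ ‖x‖ * ‖y‖ := by
    have := norm_inner_le_norm (𝕜 := ℂ) x y
    simpa using this
  have h2 : ((inner ℂ x x : ℂ)).re = ‖x‖ ^ 2 := by
    rw [← @inner_self_eq_norm_sq ℂ]; rfl
  have h3 : ((inner ℂ y y : ℂ)).re = ‖y‖ ^ 2 := by
    rw [← @inner_self_eq_norm_sq ℂ]; rfl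
  rw [h2, h3]
  calc ‖(inner ℂ x y : ℂ)‖ ^ 2 ≤ (‖x‖*‖y‖)^2 := by
        apply sq_le_sq' _ h1; nlinarith [norm_nonneg (inner ℂ x y : ℂ), norm_nonneg x, norm_nonneg y, h1]
    _ = ‖x‖^2 * ‖y‖^2 := by ring

lemma one_sub_outer_psd (w : ι → ℂ) (hw : star w ⬝ᵥ w = 1) : ((1 : Matrix ι ι ℂ) - outer w).PosSemidef := by
  refine Matrix.PosSemidef.of_dotProduct_mulVec_nonneg ?_ ?_
  · have h1 : (outer w).IsHermitian := (outer_psd w).1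
    unfold Matrix.IsHermitian at *
    rw [Matrix.conjTranspose_sub, h1, Matrix.conjTranspose_one]
  · intro x
    rw [Matrix.sub_mulVec, dotProduct_sub, Matrix.one_mulVec, dot_outer, dot_conj x w,
      ← Complex.normSq_eq_conj_mul_self]
    have hcs := psd_cs 1 Matrix.PosSemidef.one w x
    simp only [Matrix.one_mulVec] at hcs
    rw [hw] at hcs
    have hxx : star x ⬝ᵥ x = ((∑ i, Complex.normSq (x i) : ℝ) : ℂ) := by
      push_cast
      simp [dotProduct, ← Complex.normSq_eq_conj_mul_self]
    rw [hxx]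
    rw [hxx] at hcs
    simp only [Complex.one_re, one_mul, Complex.ofReal_re] at hcs
    have : ((∑ i, Complex.normSq (x i) : ℝ) : ℂ) - ((Complex.normSq (star w ⬝ᵥ x) : ℝ) : ℂ)
        = (((∑ i, Complex.normSq (x i)) - Complex.normSq (star w ⬝ᵥ x) : ℝ) : ℂ) := by push_cast; ring
    rw [this]
    apply Complex.zero_le_real.mpr
    have := Complex.sq_norm (star w ⬝ᵥ x)
    nlinarith [hcs]


lemma pure_algebra (p q c t s l m N r1 r2 : ℝ)
    (hp : 0 < p) (hq : 0 < q) (hpq : p + q = 1) (hc0 : 0 < c) (hc1 : c < 1)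
    (ht2 : t^2 = 1 - 4*p*q*c^2) (ht0 : 0 ≤ t)
    (hs2 : s^2 = 1 - c^2) (hs0 : 0 < s)
    (hl : l = (p - q + t)/2)
    (hm : m = l + q*s^2)
    (hN2 : N^2 = m^2 + (q*c*s)^2) (hN0 : 0 < N)
    (hr1 : r1 = m/N - (-(q*c*s)/N)*c/s)
    (hr2 : r2 = (-(q*c*s)/N)/s) :
    r1 + r2*c = m/N ∧ r1*c + r2 = c*l/N ∧ r1*(m/N) + r2*(c*l/N) = 1 ∧
      p*(1-(m/N)^2) + q*(c*l/N)^2 = (1-t)/2 := by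
  have hlq : l^2 = (p-q)*l + p*q*s^2 := by
    rw [hl, hs2]
    linear_combination (1/4)*ht2 - ((p+q+1)/4)*hpq
  have hr1' : r1 = (m + q*c^2)/N := by
    rw [hr1]; field_simp; ring
  have hr2' : r2 = -(q*c)/N := by
    rw [hr2]; field_simp
  have e1 : m*(p-l) = q*l*c^2 := by
    linear_combination (p-l)*hm - hlq - (q*l)*hs2
  have hA : r1 + r2*c = m/N := by
    rw [hr1', hr2']; field_simp; ring
  have hB : r1*c + r2 = c*l/N := by
    rw [hr1', hr2', div_mul_eq_mul_div, ← add_div]; congr 1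
    linear_combination c*hm + (q*c)*hs2
  have hC : r1*(m/N) + r2*(c*l/N) = 1 := by
    rw [hr1', hr2']; field_simp
    linear_combination (q*c^2)*hm - hN2
  have hD : p*(1-(m/N)^2) + q*(c*l/N)^2 = (1-t)/2 := by
    have hpt : (1-t)/2 = p - l := by rw [hl]; linarith
    rw [hpt]
    have hnum : p*N^2 - p*m^2 + q*(c*l)^2 - (p-l)*N^2 = 0 := by
      linear_combination (-m)*e1 + l*hN2 - (q*c^2*l)*hm
    field_simp
    linear_combination hnum
  exact ⟨hA, hB, hC, hD⟩

lemma pure_sInf (u v : ι → ℂ) (hu : star u ⬝ᵥ u = 1) (hv : star v ⬝ᵥ v = 1)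
    (p q c : ℝ) (hp : 0 < p) (hq : 0 < q) (hpq : p + q = 1)
    (hc : ‖(star u ⬝ᵥ v)‖ = c) (hc0 : 0 < c) (hc1 : c < 1) :
    sInf {x : ℝ | ∃ Λ : Matrix ι ι ℂ, Λ.PosSemidef ∧ (1 - Λ).PosSemidef ∧
        x = p * (((1 - Λ) * outer u).trace).re + q * ((Λ * outer v).trace).re}
      = (1 - Real.sqrt (1 - 4*p*q*c^2))/2 := by
  have houtertr : ∀ z : ι → ℂ, (outer z).trace = star z ⬝ᵥ z := by
    intro z
    rw [← Matrix.one_mul (outer z), trace_mul_outer, Matrix.one_mulVec]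
  have hsub : ∀ (Λ : Matrix ι ι ℂ) (x y : ι → ℂ),
      star x ⬝ᵥ (1 - Λ) *ᵥ y = star x ⬝ᵥ y - star x ⬝ᵥ Λ *ᵥ y := by
    intro Λ x y; rw [Matrix.sub_mulVec, dotProduct_sub, Matrix.one_mulVec]
  -- lower bound
  have lb : ∀ x ∈ {x : ℝ | ∃ Λ : Matrix ι ι ℂ, Λ.PosSemidef ∧ (1 - Λ).PosSemidef ∧
        x = p * (((1 - Λ) * outer u).trace).re + q * ((Λ * outer v).trace).re},
      (1 - Real.sqrt (1 - 4*p*q*c^2))/2 ≤ x := by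
    rintro x ⟨Λ, hΛ, hΛ', rfl⟩
    set a := (star u ⬝ᵥ Λ *ᵥ u).re with ha
    set b := (star v ⬝ᵥ Λ *ᵥ v).re with hb
    have htr1 : (((1-Λ) * outer u).trace).re = 1 - a := by
      rw [Matrix.sub_mul, Matrix.one_mul, Matrix.trace_sub, trace_mul_outer, houtertr, hu]
      simp [Complex.sub_re, ha]
    have htr2 : ((Λ * outer v).trace).re = b := by rw [trace_mul_outer]
    rw [htr1, htr2]
    have ha0 : 0 ≤ a := by simpa using (Complex.le_def.mp (hΛ.dotProduct_mulVec_nonneg u)).1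
    have hb0 : 0 ≤ b := by simpa using (Complex.le_def.mp (hΛ.dotProduct_mulVec_nonneg v)).1
    have hre1 : (star u ⬝ᵥ (1-Λ) *ᵥ u).re = 1 - a := by
      rw [hsub, hu]; simp [Complex.sub_re, ha]
    have hre2 : (star v ⬝ᵥ (1-Λ) *ᵥ v).re = 1 - b := by
      rw [hsub, hv]; simp [Complex.sub_re, hb]
    have ha1 : a ≤ 1 := by
      have h := (Complex.le_def.mp (hΛ'.dotProduct_mulVec_nonneg u)).1
      rw [hre1] at h; simp only [Complex.zero_re] at h; linarith
    have hb1 : b ≤ 1 := by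
      have h := (Complex.le_def.mp (hΛ'.dotProduct_mulVec_nonneg v)).1
      rw [hre2] at h; simp only [Complex.zero_re] at h; linarith
    have habs : ∀ (M : Matrix ι ι ℂ), M.PosSemidef →
        ‖(star u ⬝ᵥ M *ᵥ v)‖
          ≤ Real.sqrt ((star u ⬝ᵥ M *ᵥ u).re * (star v ⬝ᵥ M *ᵥ v).re) := by
      intro M hM
      rw [show ‖(star u ⬝ᵥ M *ᵥ v)‖
          = Real.sqrt (‖(star u ⬝ᵥ M *ᵥ v)‖^2) from
        (Real.sqrt_sq (norm_nonneg _)).symm]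
      exact Real.sqrt_le_sqrt (psd_cs M hM u v)
    have hcs : c ≤ Real.sqrt (a*b) + Real.sqrt ((1-a)*(1-b)) := by
      have hsplit : star u ⬝ᵥ v = star u ⬝ᵥ Λ *ᵥ v + star u ⬝ᵥ (1-Λ) *ᵥ v := by
        rw [hsub]; ring
      calc c = ‖(star u ⬝ᵥ v)‖ := hc.symm
        _ ≤ ‖(star u ⬝ᵥ Λ *ᵥ v)‖ + ‖(star u ⬝ᵥ (1-Λ) *ᵥ v)‖ := by
            rw [hsplit]; exact norm_add_le _ _
        _ ≤ Real.sqrt (a*b) + Real.sqrt ((1-a)*(1-b)) := by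
            have h1 := habs Λ hΛ
            have h2 := habs (1-Λ) hΛ'
            rw [hre1, hre2] at h2
            exact add_le_add h1 h2
    exact key_ineq p q a b c hp hq hpq ha0 ha1 hb0 hb1 hc0.le hc1.le hcs
  -- upper bound: the optimal measurement
  set t := Real.sqrt (1 - 4*p*q*c^2) with ht
  have hc2 : c^2 < 1 := by nlinarith
  have htin : 0 ≤ 1 - 4*p*q*c^2 := by nlinarith [mul_pos hp hq, sq_nonneg (p-q), sq_nonneg c]
  have ht2 : t^2 = 1 - 4*p*q*c^2 := Real.sq_sqrt htin
  have ht0 : 0 ≤ t := Real.sqrt_nonneg _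
  obtain ⟨l, hl⟩ : ∃ l : ℝ, l = (p - q + t)/2 := ⟨_, rfl⟩
  obtain ⟨s, hsd⟩ : ∃ s : ℝ, s = Real.sqrt (1 - c^2) := ⟨_, rfl⟩
  have hs2 : s^2 = 1 - c^2 := by rw [hsd]; exact Real.sq_sqrt (by nlinarith)
  have hs0 : 0 < s := by rw [hsd]; exact Real.sqrt_pos.mpr (by nlinarith)
  obtain ⟨m, hm⟩ : ∃ m : ℝ, m = l + q*s^2 := ⟨_, rfl⟩
  obtain ⟨N, hNd⟩ : ∃ N : ℝ, N = Real.sqrt (m^2 + (q*c*s)^2) := ⟨_, rfl⟩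
  have htqp : q - p ≤ t := by
    nlinarith [mul_pos hp hq, sq_nonneg c, sq_nonneg (t - (q-p)), sq_nonneg (t + (q-p))]
  have hl0 : 0 ≤ l := by rw [hl]; linarith
  have hm0 : 0 < m := by
    have : 0 < q*s^2 := by positivity
    rw [hm]; linarith
  have hN2 : N^2 = m^2 + (q*c*s)^2 := by rw [hNd]; exact Real.sq_sqrt (by positivity)
  have hN0 : 0 < N := by rw [hNd]; exact Real.sqrt_pos.mpr (by positivity)
  obtain ⟨r1, hr1⟩ : ∃ r1 : ℝ, r1 = m/N - (-(q*c*s)/N)*c/s := ⟨_, rfl⟩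
  obtain ⟨r2, hr2⟩ : ∃ r2 : ℝ, r2 = (-(q*c*s)/N)/s := ⟨_, rfl⟩
  obtain ⟨hA, hB, hC, hD⟩ := pure_algebra p q c t s l m N r1 r2 hp hq hpq hc0 hc1
    ht2 ht0 hs2 hs0 hl hm hN2 hN0 hr1 hr2
  -- phase-adjusted second vector
  have hκ0 : star u ⬝ᵥ v ≠ 0 := by
    intro h
    rw [h] at hc
    simp at hc
    exact hc0.ne' hc.symm
  obtain ⟨ζ, hζ⟩ : ∃ ζ : ℂ, ζ = (c:ℂ)/(star u ⬝ᵥ v) := ⟨_, rfl⟩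
  have hζabs : ‖ζ‖ = 1 := by
    rw [hζ, norm_div, Complex.norm_real, Real.norm_eq_abs, hc, abs_of_pos hc0, div_self hc0.ne']
  have hζ1 : ζ * starRingEnd ℂ ζ = 1 := by
    rw [Complex.mul_conj]
    norm_cast
    rw [Complex.normSq_eq_norm_sq, hζabs]
    norm_num
  obtain ⟨v', hv'⟩ : ∃ v' : ι → ℂ, v' = ζ • v := ⟨_, rfl⟩
  have houter : outer v' = outer v := by
    ext i j
    simp only [outer, Matrix.of_apply, hv', Pi.smul_apply, smul_eq_mul, _root_.map_mul]
    linear_combination (v i * starRingEnd ℂ (v j)) * hζ1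
  have huv' : star u ⬝ᵥ v' = (c:ℂ) := by
    rw [hv', dotProduct_smul, smul_eq_mul, hζ, div_mul_cancel₀ _ hκ0]
  have hv'd : star v' ⬝ᵥ v' = 1 := by
    rw [hv', star_smul, smul_dotProduct, dotProduct_smul, hv, smul_eq_mul, smul_eq_mul,
      mul_one, Complex.star_def]
    linear_combination hζ1
  have hv'u : star v' ⬝ᵥ u = (c:ℂ) := by
    rw [dot_conj, huv', Complex.conj_ofReal]
  obtain ⟨w, hw⟩ : ∃ w : ι → ℂ, w = ((r1:ℝ):ℂ) • u + ((r2:ℝ):ℂ) • v' := ⟨_, rfl⟩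
  have hd : ∀ x : ι → ℂ, star x ⬝ᵥ w = (r1:ℂ) * (star x ⬝ᵥ u) + (r2:ℂ) * (star x ⬝ᵥ v') := by
    intro x
    rw [hw, dotProduct_add, dotProduct_smul, dotProduct_smul, smul_eq_mul, smul_eq_mul]
  have huw : star u ⬝ᵥ w = ((m/N : ℝ):ℂ) := by
    rw [hd, hu, huv', mul_one]
    exact_mod_cast congrArg (Complex.ofReal) hA
  have hv'w : star v' ⬝ᵥ w = ((c*l/N : ℝ):ℂ) := by
    rw [hd, hv'u, hv'd, mul_one]
    exact_mod_cast congrArg (Complex.ofReal) hB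
  have hwu : star w ⬝ᵥ u = ((m/N : ℝ):ℂ) := by
    rw [dot_conj, huw, Complex.conj_ofReal]
  have hwv' : star w ⬝ᵥ v' = ((c*l/N : ℝ):ℂ) := by
    rw [dot_conj, hv'w, Complex.conj_ofReal]
  have hww : star w ⬝ᵥ w = 1 := by
    rw [hd w, hwu, hwv']
    exact_mod_cast congrArg (Complex.ofReal) hC
  have member : (1 - t)/2 ∈ {x : ℝ | ∃ Λ : Matrix ι ι ℂ, Λ.PosSemidef ∧ (1 - Λ).PosSemidef ∧
        x = p * (((1 - Λ) * outer u).trace).re + q * ((Λ * outer v).trace).re} := by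
    refine ⟨outer w, outer_psd w, one_sub_outer_psd w hww, ?_⟩
    have htr1 : (((1 - outer w) * outer u).trace) = 1 - ((m/N:ℝ):ℂ)^2 := by
      rw [Matrix.sub_mul, Matrix.one_mul, Matrix.trace_sub, trace_mul_outer, houtertr, hu,
        dot_outer, huw, hwu]
      ring
    have htr2 : ((outer w * outer v).trace) = ((c*l/N : ℝ):ℂ)^2 := by
      rw [← houter, trace_mul_outer, dot_outer, hv'w, hwv']
      ring
    rw [htr1, htr2]
    have hre1 : ((1 : ℂ) - ((m/N:ℝ):ℂ)^2).re = 1 - (m/N)^2 := by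
      norm_cast
    have hre2 : ((((c*l/N : ℝ):ℂ))^2).re = (c*l/N)^2 := by
      norm_cast
    rw [hre1, hre2, hD]
  apply le_antisymm
  · exact csInf_le ⟨(1-t)/2, lb⟩ member
  · exact le_csInf ⟨(1-t)/2, member⟩ lb


lemma dot_prod_pow {d : ℕ} (x y : Fin d → ℂ) (n : ℕ) :
    star (fun i : Fin n → Fin d => ∏ k, x (i k)) ⬝ᵥ (fun i : Fin n → Fin d => ∏ k, y (i k))
      = (star x ⬝ᵥ y)^n := by
  have h : (star x ⬝ᵥ y)^n = ∏ _k : Fin n, (star x ⬝ᵥ y) := by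
    rw [Finset.prod_const, Finset.card_univ, Fintype.card_fin]
  rw [h]
  simp only [dotProduct, Pi.star_apply]
  rw [Finset.prod_univ_sum]
  rw [Fintype.piFinset_univ]
  refine Finset.sum_congr rfl fun i _ => ?_
  rw [show star (∏ k, x (i k)) = ∏ k, star (x (i k)) from by
    simp only [Complex.star_def, map_prod], ← Finset.prod_mul_distrib]

lemma inner_eq_dot {d : ℕ} (x y : EuclideanSpace ℂ (Fin d)) :
    (inner ℂ x y : ℂ) = star (x : Fin d → ℂ) ⬝ᵥ (y : Fin d → ℂ) := by
  simp [PiLp.inner_apply, RCLike.inner_apply, dotProduct]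
  exact Finset.sum_congr rfl fun i _ => mul_comm _ _

/-- **Sample complexity of symmetric binary quantum hypothesis testing for two
pure states**: `n*(p, ψψ*, q, φφ*, ε) = ⌈ ln(pq/(ε(1-ε))) / (−ln F) ⌉` where
`F = |⟨ψ,φ⟩|²`. -/
theorem sample_complexity_pure {d : ℕ} (ψ φ : EuclideanSpace ℂ (Fin d))
    (hψ : ‖ψ‖ = 1) (hφ : ‖φ‖ = 1)
    (p q ε : ℝ) (hp : p ∈ Set.Ioo (0 : ℝ) 1) (hq : q = 1 - p)
    (hε : ε ∈ Set.Ioo 0 (min p q))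
    (F : ℝ) (hF : F = ‖(inner ℂ ψ φ : ℂ)‖ ^ 2)
    (hF0 : 0 < F) (hF1 : F < 1) :
    (sampleComplexity p (Matrix.of fun i j => ψ i * starRingEnd ℂ (ψ j)) q
        (Matrix.of fun i j => φ i * starRingEnd ℂ (φ j)) ε : ℤ)
      = ⌈Real.log (p * q / (ε * (1 - ε))) / (-Real.log F)⌉ := by
  obtain ⟨hp0, hp1⟩ := hp
  have hq0 : 0 < q := by rw [hq]; linarith
  obtain ⟨hε0, hεm⟩ := hε
  have hεp : ε < p := lt_of_lt_of_le hεm (min_le_left p q)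
  have hεq : ε < q := lt_of_lt_of_le hεm (min_le_right p q)
  have hpq : p + q = 1 := by rw [hq]; ring
  have hεhalf : ε < 1/2 := by
    rcases le_total p q with h | h
    · linarith
    · linarith
  have hκ0 : 0 < ‖(inner ℂ ψ φ : ℂ)‖ := by
    rcases (norm_nonneg (inner ℂ ψ φ : ℂ)).lt_or_eq with h | h
    · exact h
    · exfalso
      rw [hF, ← h] at hF0
      simp at hF0
  have hκ1 : ‖(inner ℂ ψ φ : ℂ)‖ < 1 := by nlinarith [hF, hF1, hκ0]
  have hψd : star (ψ : Fin d → ℂ) ⬝ᵥ (ψ : Fin d → ℂ) = 1 := by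
    rw [← inner_eq_dot ψ ψ, inner_self_eq_norm_sq_to_K (𝕜 := ℂ), hψ]
    norm_num
  have hφd : star (φ : Fin d → ℂ) ⬝ᵥ (φ : Fin d → ℂ) = 1 := by
    rw [← inner_eq_dot φ φ, inner_self_eq_norm_sq_to_K (𝕜 := ℂ), hφ]
    norm_num
  -- exact error probability with n copies
  have perr : ∀ n : ℕ, 1 ≤ n →
      pErr p (Matrix.of fun i j => ψ i * starRingEnd ℂ (ψ j)) q
        (Matrix.of fun i j => φ i * starRingEnd ℂ (φ j)) n
      = (1 - Real.sqrt (1 - 4*p*q*F^n))/2 := by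
    intro n hn
    have hU : tensorPow (Matrix.of fun i j => ψ i * starRingEnd ℂ (ψ j)) n
        = outer (fun i : Fin n → Fin d => ∏ k, ψ (i k)) := by
      ext i j
      simp only [tensorPow, outer, Matrix.of_apply]
      rw [Finset.prod_mul_distrib, map_prod]
    have hV : tensorPow (Matrix.of fun i j => φ i * starRingEnd ℂ (φ j)) n
        = outer (fun i : Fin n → Fin d => ∏ k, φ (i k)) := by
      ext i j
      simp only [tensorPow, outer, Matrix.of_apply]
      rw [Finset.prod_mul_distrib, map_prod]
    have hud : star (fun i : Fin n → Fin d => ∏ k, ψ (i k))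
        ⬝ᵥ (fun i : Fin n → Fin d => ∏ k, ψ (i k)) = 1 := by
      rw [dot_prod_pow, hψd, one_pow]
    have hvd : star (fun i : Fin n → Fin d => ∏ k, φ (i k))
        ⬝ᵥ (fun i : Fin n → Fin d => ∏ k, φ (i k)) = 1 := by
      rw [dot_prod_pow, hφd, one_pow]
    have hcabs : ‖(star (fun i : Fin n → Fin d => ∏ k, ψ (i k))
        ⬝ᵥ (fun i : Fin n → Fin d => ∏ k, φ (i k)))‖ = (‖(inner ℂ ψ φ : ℂ)‖)^n := by
      rw [dot_prod_pow, ← inner_eq_dot ψ φ, norm_pow]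
    have heq := pure_sInf (fun i : Fin n → Fin d => ∏ k, ψ (i k))
      (fun i : Fin n → Fin d => ∏ k, φ (i k)) hud hvd p q
      ((‖(inner ℂ ψ φ : ℂ)‖)^n) hp0 hq0 hpq hcabs
      (pow_pos hκ0 n) (pow_lt_one₀ hκ0.le hκ1 (by omega))
    rw [pErr, hU, hV, heq]
    congr 2
    rw [hF, ← pow_mul, ← pow_mul, Nat.mul_comm]
  -- threshold arithmetic
  have hlogF : Real.log F < 0 := Real.log_neg hF0 hF1
  have hratio1 : 1 < p*q/(ε*(1-ε)) := by
    rw [lt_div_iff₀ (by nlinarith)]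
    nlinarith [mul_pos (sub_pos.mpr hεp) (sub_pos.mpr hεq)]
  have hx0 : 0 < Real.log (p*q/(ε*(1-ε))) / (-Real.log F) :=
    div_pos (Real.log_pos hratio1) (by linarith)
  have hlogflip : Real.log (ε*(1-ε)/(p*q)) = - Real.log (p*q/(ε*(1-ε))) := by
    rw [← Real.log_inv]
    congr 1
    field_simp
  have key : ∀ n : ℕ, 1 ≤ n →
      (pErr p (Matrix.of fun i j => ψ i * starRingEnd ℂ (ψ j)) q
        (Matrix.of fun i j => φ i * starRingEnd ℂ (φ j)) n ≤ ε
      ↔ Real.log (p*q/(ε*(1-ε))) / (-Real.log F) ≤ (n : ℝ)) := by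
    intro n hn
    rw [perr n hn]
    have hFn1 : F^n ≤ 1 := pow_le_one₀ hF0.le hF1.le
    have hFn0 : 0 < F^n := pow_pos hF0 n
    have h4pq : 4*p*q ≤ 1 := by nlinarith [sq_nonneg (p-q)]
    have hin : 0 ≤ 1 - 4*p*q*F^n := by nlinarith [mul_pos hp0 hq0]
    have hlogstep : F^n ≤ ε*(1-ε)/(p*q) ↔
        Real.log (p*q/(ε*(1-ε))) / (-Real.log F) ≤ (n : ℝ) := by
      rw [div_le_iff₀ (by linarith : (0:ℝ) < -Real.log F)]
      constructor
      · intro h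
        have h5 : Real.log (F^n) ≤ Real.log (ε*(1-ε)/(p*q)) :=
          Real.log_le_log hFn0 h
        rw [Real.log_pow, hlogflip] at h5
        nlinarith [h5]
      · intro h
        have h5 : Real.log (F^n) ≤ Real.log (ε*(1-ε)/(p*q)) := by
          rw [Real.log_pow, hlogflip]
          nlinarith [h]
        have := (Real.log_le_log_iff hFn0 (div_pos (by nlinarith) (mul_pos hp0 hq0))).mp h5
        exact this
    rw [← hlogstep]
    constructor
    · intro h
      have h1 : 1 - 2*ε ≤ Real.sqrt (1-4*p*q*F^n) := by linarith
      have h2 : (1-2*ε)^2 ≤ 1 - 4*p*q*F^n :=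
        (Real.le_sqrt (by linarith) hin).mp h1
      rw [le_div_iff₀ (mul_pos hp0 hq0)]
      nlinarith
    · intro h
      rw [le_div_iff₀ (mul_pos hp0 hq0)] at h
      have h2 : (1-2*ε)^2 ≤ 1 - 4*p*q*F^n := by nlinarith
      have h1 : 1 - 2*ε ≤ Real.sqrt (1-4*p*q*F^n) :=
        (Real.le_sqrt (by linarith) hin).mpr h2
      linarith
  have hset : {n : ℕ | 1 ≤ n ∧
      pErr p (Matrix.of fun i j => ψ i * starRingEnd ℂ (ψ j)) q
        (Matrix.of fun i j => φ i * starRingEnd ℂ (φ j)) n ≤ ε}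
      = Set.Ici ⌈Real.log (p*q/(ε*(1-ε))) / (-Real.log F)⌉₊ := by
    ext n
    simp only [Set.mem_setOf_eq, Set.mem_Ici]
    constructor
    · rintro ⟨h1, h2⟩
      exact Nat.ceil_le.mpr ((key n h1).mp h2)
    · intro h
      have hc1 : 1 ≤ ⌈Real.log (p*q/(ε*(1-ε))) / (-Real.log F)⌉₊ :=
        Nat.one_le_ceil_iff.mpr hx0
      have h1 : 1 ≤ n := le_trans hc1 h
      refine ⟨h1, (key n h1).mpr ?_⟩
      calc Real.log (p*q/(ε*(1-ε))) / (-Real.log F)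
          ≤ (⌈Real.log (p*q/(ε*(1-ε))) / (-Real.log F)⌉₊ : ℝ) := Nat.le_ceil _
        _ ≤ (n : ℝ) := by exact_mod_cast h
  have hval : sampleComplexity p (Matrix.of fun i j => ψ i * starRingEnd ℂ (ψ j)) q
      (Matrix.of fun i j => φ i * starRingEnd ℂ (φ j)) ε
      = ⌈Real.log (p*q/(ε*(1-ε))) / (-Real.log F)⌉₊ := by
    rw [sampleComplexity, hset, csInf_Ici]
  rw [hval]
  exact Int.natCast_ceil_eq_ceil hx0.le

end AuxQHT

end QHT

end
end
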